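/- Let V = {v₁, …, v_m} ⊂ ℝⁿ be a finite set, γ ≥ 0, and let B_γ(v) denote the closed γ-ball in the ℓ∞-norm around v. Let V^γ be the union of the vertex sets of the hypercubes B_γ(vᵢ), i = 1, …, m. Then the convex hull of V^γ equals the closed γ-neighborhood (in ℓ∞) of the convex hull of V, i.e., conv(V^γ) = { z : ∃ v ∈ conv(V), ‖z − v‖_∞ ≤ γ }. -/
import Mathlib
open Pointwise

lemma cube_hull (γ : ℝ) (hγ : 0 ≤ γ) {n : ℕ} :
    convexHull ℝ {w : Fin n → ℝ | ∃ s : Fin n → ℝ, (∀ i, s i = 1 ∨ s i = -1) ∧ w = γ • s}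
      = {w : Fin n → ℝ | ‖w‖ ≤ γ} := by
  have hset : {w : Fin n → ℝ | ∃ s : Fin n → ℝ, (∀ i, s i = 1 ∨ s i = -1) ∧ w = γ • s}
      = Set.pi Set.univ (fun _ : Fin n => ({γ, -γ} : Set ℝ)) := by
    ext w
    simp only [Set.mem_setOf_eq, Set.mem_pi, Set.mem_univ, forall_true_left, Set.mem_insert_iff,
      Set.mem_singleton_iff]
    constructor
    · rintro ⟨s, hs, rfl⟩ i
      rcases hs i with h | h <;> simp [h]
    · intro h
      refine ⟨fun i => if w i = γ then 1 else -1, fun i => ?_, ?_⟩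
      · dsimp only; split <;> simp
      · funext i
        dsimp only [Pi.smul_apply, smul_eq_mul]
        by_cases hc : w i = γ
        · rw [if_pos hc, hc]; ring
        · rw [if_neg hc, (h i).resolve_left hc]; ring
  rw [hset, convexHull_pi]
  ext w
  have hseg : convexHull ℝ ({γ, -γ} : Set ℝ) = Set.Icc (-γ) γ := by
    rw [convexHull_pair, segment_symm, segment_eq_Icc (by linarith)]
  simp only [hseg, Set.mem_pi, Set.mem_univ, forall_true_left, Set.mem_setOf_eq,
    pi_norm_le_iff_of_nonneg hγ, Real.norm_eq_abs, abs_le, Set.mem_Icc]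

/-- For a finite V ⊂ ℝⁿ with the ℓ∞ norm, the convex hull of the vertices of
the γ-hypercubes around the points of V equals the closed γ-neighborhood (in ℓ∞) of conv V. -/
theorem stmt9 {n : ℕ} (V : Finset (Fin n → ℝ)) (γ : ℝ) (hγ : 0 ≤ γ) :
    convexHull ℝ
        {w : Fin n → ℝ | ∃ v ∈ V, ∃ s : Fin n → ℝ, (∀ i, s i = 1 ∨ s i = -1) ∧ w = v + γ • s}
      = {z : Fin n → ℝ | ∃ v ∈ convexHull ℝ (V : Set (Fin n → ℝ)), ‖z - v‖ ≤ γ} := by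
  have hsum : {w : Fin n → ℝ | ∃ v ∈ V, ∃ s : Fin n → ℝ, (∀ i, s i = 1 ∨ s i = -1) ∧ w = v + γ • s}
      = (V : Set (Fin n → ℝ)) +
        {w : Fin n → ℝ | ∃ s : Fin n → ℝ, (∀ i, s i = 1 ∨ s i = -1) ∧ w = γ • s} := by
    ext w
    simp only [Set.mem_setOf_eq, Set.mem_add]
    constructor
    · rintro ⟨v, hv, s, hs, rfl⟩
      exact ⟨v, hv, γ • s, ⟨s, hs, rfl⟩, rfl⟩
    · rintro ⟨v, hv, _, ⟨s, hs, rfl⟩, rfl⟩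
      exact ⟨v, hv, s, hs, rfl⟩
  rw [hsum, convexHull_add, cube_hull γ hγ]
  ext z
  simp only [Set.mem_add, Set.mem_setOf_eq]
  constructor
  · rintro ⟨v, hv, w, hw, rfl⟩
    exact ⟨v, hv, by simpa using hw⟩
  · rintro ⟨v, hv, hz⟩
    exact ⟨v, hv, z - v, hz, by ring⟩
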